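/- Let (G, M, I) be a finite formal context and let c = (A, B) be a formal concept. A subset H ⊆ B is a minimal generator of c (H'' = B and no proper subset H₁ ⊊ H satisfies H₁'' = B) if and only if H is a minimal blocker of the family Λ_c = { B \ B_d : c_d = (A_d, B_d) is an upper cover of c } of intentional faces of c (H meets every member of Λ_c and no proper subset of H does). This correspondence underlies the correctness of the Minigen procedure (Algorithm 1). -/

import Mathlib

/-- The derivation `A'`: attributes common to all objects of `A`. -/
def intentOf {G M : Type*} (I : Set (G × M)) (A : Set G) : Set M :=
  {m | ∀ g ∈ A, (g, m) ∈ I}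

/-- The derivation `B'`: objects sharing all attributes of `B`. -/
def extentOf {G M : Type*} (I : Set (G × M)) (B : Set M) : Set G :=
  {g | ∀ m ∈ B, (g, m) ∈ I}

/-- A formal concept of the context `(G, M, I)`: a pair `(A, B)` with `A' = B` and `B' = A`. -/
def IsConcept {G M : Type*} (I : Set (G × M)) (A : Set G) (B : Set M) : Prop :=
  intentOf I A = B ∧ extentOf I B = A

/-- `(Ad, Bd)` is an upper cover of the concept `(A, B)`: it is a concept strictly above
`(A, B)` (concepts are ordered by inclusion of extents) with no concept strictly between. -/
def IsUpperCover {G M : Type*} (I : Set (G × M)) (A : Set G) (_B : Set M)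
    (Ad : Set G) (Bd : Set M) : Prop :=
  IsConcept I Ad Bd ∧ A ⊂ Ad ∧
    ∀ A₃ : Set G, ∀ B₃ : Set M, IsConcept I A₃ B₃ → ¬(A ⊂ A₃ ∧ A₃ ⊂ Ad)

/-- `(Al, Bl)` is a lower cover of the concept `(A, B)`: it is a concept strictly below
`(A, B)` (concepts are ordered by inclusion of extents) with no concept strictly between. -/
def IsLowerCover {G M : Type*} (I : Set (G × M)) (A : Set G) (_B : Set M)
    (Al : Set G) (Bl : Set M) : Prop :=
  IsConcept I Al Bl ∧ Al ⊂ A ∧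
    ∀ A₃ : Set G, ∀ B₃ : Set M, IsConcept I A₃ B₃ → ¬(Al ⊂ A₃ ∧ A₃ ⊂ A)

section Aux
variable {G M : Type*} (I : Set (G × M))

lemma subset_intent_extent (H : Set M) : H ⊆ intentOf I (extentOf I H) :=
  fun m hm g hg => hg m hm

lemma subset_extent_intent (A : Set G) : A ⊆ extentOf I (intentOf I A) :=
  fun g hg m hm => hm g hg

lemma extent_antitone {B₁ B₂ : Set M} (h : B₁ ⊆ B₂) : extentOf I B₂ ⊆ extentOf I B₁ :=
  fun g hg m hm => hg m (h hm)

lemma intent_antitone {A₁ A₂ : Set G} (h : A₁ ⊆ A₂) : intentOf I A₂ ⊆ intentOf I A₁ :=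
  fun m hm g hg => hm g (h hg)

lemma extent_intent_extent (H : Set M) :
    extentOf I (intentOf I (extentOf I H)) = extentOf I H :=
  subset_antisymm (extent_antitone I (subset_intent_extent I H)) (subset_extent_intent I _)

/-- `H ⊆ B` is a generator of the concept `(A, B)` iff it blocks every intentional face. -/
lemma gen_iff_block [Finite G] (A : Set G) (B : Set M) (h : IsConcept I A B)
    (H : Set M) (hHB : H ⊆ B) :
    intentOf I (extentOf I H) = B ↔
      ∀ f ∈ {f : Set M | ∃ (Ad : Set G) (Bd : Set M),
          IsUpperCover I A B Ad Bd ∧ f = B \ Bd}, (H ∩ f).Nonempty := by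
  constructor
  · rintro hgen f ⟨Ad, Bd, ⟨hcd, hA, _⟩, rfl⟩
    by_contra hempty
    rw [Set.not_nonempty_iff_eq_empty] at hempty
    -- H ⊆ Bd
    have hHBd : H ⊆ Bd := by
      intro m hm
      by_contra hmBd
      have : m ∈ H ∩ (B \ Bd) := ⟨hm, hHB hm, hmBd⟩
      simp [hempty] at this
    -- then B = i(e H) ⊆ i(e Bd) = i Ad = Bd
    have hBBd : B ⊆ Bd := by
      calc B = intentOf I (extentOf I H) := hgen.symm
        _ ⊆ intentOf I (extentOf I Bd) := intent_antitone I (extent_antitone I hHBd)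
        _ = intentOf I Ad := by rw [hcd.2]
        _ = Bd := hcd.1
    -- also Bd ⊆ B since A ⊆ Ad
    have hBdB : Bd ⊆ B := by
      calc Bd = intentOf I Ad := hcd.1.symm
        _ ⊆ intentOf I A := intent_antitone I hA.1
        _ = B := h.1
    have : Ad = A := by rw [← hcd.2, subset_antisymm hBdB hBBd, h.2]
    exact hA.2 (this ▸ le_refl _)
  · intro hblock
    -- i (e H) ⊆ B
    have hsub : intentOf I (extentOf I H) ⊆ B := by
      calc intentOf I (extentOf I H) ⊆ intentOf I (extentOf I B) :=
            intent_antitone I (extent_antitone I hHB)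
        _ = intentOf I A := by rw [h.2]
        _ = B := h.1
    by_contra hne
    -- then A ⊂ e H
    have hAeH : A ⊂ extentOf I H := by
      refine ⟨h.2 ▸ extent_antitone I hHB, fun hle => ?_⟩
      have : extentOf I H = A := subset_antisymm hle (h.2 ▸ extent_antitone I hHB)
      exact hne (by rw [this, h.1])
    -- take a minimal concept extent E with A ⊂ E ⊆ e H
    set S : Set (Set G) :=
      {E | IsConcept I E (intentOf I E) ∧ A ⊂ E ∧ E ⊆ extentOf I H} with hS
    have hne' : S.Nonempty := by
      refine ⟨extentOf I H, ⟨rfl, extent_intent_extent I H⟩, hAeH, le_refl _⟩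
    obtain ⟨E, hES, hmin⟩ : ∃ E ∈ S, ∀ E' ∈ S, E' ≤ E → E = E' := by
      obtain ⟨E, hE⟩ := (Set.toFinite S).exists_minimal hne'
      exact ⟨E, hE.1, fun E' hE' hle => le_antisymm (hE.2 hE' hle) hle⟩
    obtain ⟨hEc, hAE, hEeH⟩ := hES
    -- (E, i E) is an upper cover of (A, B)
    have hcover : IsUpperCover I A B E (intentOf I E) := by
      refine ⟨hEc, hAE, fun A₃ B₃ hc₃ ⟨h₁, h₂⟩ => ?_⟩
      have hA₃S : A₃ ∈ S := by
        refine ⟨⟨rfl, ?_⟩, h₁, h₂.1.trans hEeH⟩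
        rw [hc₃.1, hc₃.2]
      exact h₂.2 (le_of_eq (hmin A₃ hA₃S h₂.1))
    obtain ⟨m, hmH, _, hmBd⟩ := hblock _ ⟨E, intentOf I E, hcover, rfl⟩
    -- but H ⊆ i(e H) ⊆ i E
    have : H ⊆ intentOf I E :=
      (subset_intent_extent I H).trans (intent_antitone I hEeH)
    exact hmBd (this hmH)

end Aux

/-- Minimal-generator / minimal-blocker correspondence: `H ⊆ B` is a minimal generator
of the concept `(A, B)` iff it is a minimal blocker of the family `Λ_c` of intentional
faces of `(A, B)` (correctness of the Minigen procedure). -/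
theorem minimal_generator_iff_minimal_blocker {G M : Type*} [Finite G] [Finite M]
    (I : Set (G × M)) (A : Set G) (B : Set M) (h : IsConcept I A B)
    (H : Set M) (hHB : H ⊆ B) :
    (intentOf I (extentOf I H) = B ∧
        ∀ H₁ : Set M, H₁ ⊂ H → intentOf I (extentOf I H₁) ≠ B) ↔
      ((∀ f ∈ {f : Set M | ∃ (Ad : Set G) (Bd : Set M),
            IsUpperCover I A B Ad Bd ∧ f = B \ Bd}, (H ∩ f).Nonempty) ∧
        ∀ Z : Set M, Z ⊂ H →
          ¬ ∀ f ∈ {f : Set M | ∃ (Ad : Set G) (Bd : Set M),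
              IsUpperCover I A B Ad Bd ∧ f = B \ Bd}, (Z ∩ f).Nonempty) := by
  have key : ∀ K : Set M, K ⊆ B →
      (intentOf I (extentOf I K) = B ↔
        ∀ f ∈ {f : Set M | ∃ (Ad : Set G) (Bd : Set M),
            IsUpperCover I A B Ad Bd ∧ f = B \ Bd}, (K ∩ f).Nonempty) :=
    fun K hK => gen_iff_block I A B h K hK
  constructor
  · rintro ⟨hgen, hmingen⟩
    refine ⟨(key H hHB).mp hgen, fun Z hZ hblockZ => ?_⟩
    exact hmingen Z hZ ((key Z (hZ.1.trans hHB)).mpr hblockZ)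
  · rintro ⟨hblock, hminblock⟩
    refine ⟨(key H hHB).mpr hblock, fun H₁ hH₁ hgen₁ => ?_⟩
    exact hminblock H₁ hH₁ ((key H₁ (hH₁.1.trans hHB)).mp hgen₁)
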